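/- Let ψ be the real root of X³−X²−X−1. For all n ≥ 2, |T(n) − c₁ψⁿ| < 0.29, where c₁ = 1/(−ψ² + 4ψ − 1). -/

import Mathlib

def trib : ℕ → ℕ
  | 0 => 0
  | 1 => 1
  | 2 => 1
  | (n+3) => trib (n+2) + trib (n+1) + trib n

set_option maxHeartbeats 1000000 in
theorem stmt_6 (ψ : ℝ) (hψ : ψ^3 = ψ^2 + ψ + 1)
    (c₁ : ℝ) (hc₁ : c₁ = 1 / (-ψ^2 + 4*ψ - 1)) :
    ∀ n : ℕ, 2 ≤ n → |(trib n : ℝ) - c₁ * ψ^n| < 0.29 := by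
  have hψ1 : (1.83:ℝ) < ψ := by
    nlinarith [sq_nonneg (ψ + 0.42), sq_nonneg (ψ - 1.83), sq_nonneg ψ]
  have hψ2 : ψ < 1.85 := by
    nlinarith [sq_nonneg (ψ + 0.42), sq_nonneg (ψ - 1.85), sq_nonneg ψ]
  have hψ0 : (0:ℝ) < ψ := by linarith
  have hd : (2.971:ℝ) < -ψ^2 + 4*ψ - 1 := by
    nlinarith [mul_pos (sub_pos.2 hψ1) (sub_pos.2 hψ2)]
  have hd2 : -ψ^2 + 4*ψ - 1 < 2.978 := by nlinarith [sq_nonneg (ψ - 2)]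
  have hcd : c₁ * (-ψ^2 + 4*ψ - 1) = 1 := by
    rw [hc₁]; exact one_div_mul_cancel (ne_of_gt (by linarith))
  have hc1l : (0.3357:ℝ) < c₁ := by nlinarith
  have hc1u : c₁ < 0.3366 := by nlinarith
  have hu : ψ^2 - ψ ≤ 1.5725 := by nlinarith [mul_pos (sub_pos.2 hψ1) (sub_pos.2 hψ2)]
  have hu0 : (0:ℝ) ≤ ψ^2 - ψ := by nlinarith
  obtain ⟨e, he⟩ : ∃ e : ℕ → ℝ, e = fun k => (trib k : ℝ) - c₁ * ψ^k := ⟨_, rfl⟩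
  have hrec : ∀ k, e (k+3) = e (k+2) + e (k+1) + e k := by
    intro k
    have ht : ((trib (k+3) : ℕ) : ℝ) = (trib (k+2) : ℝ) + (trib (k+1) : ℝ) + (trib k : ℝ) := by
      show ((trib (k+2) + trib (k+1) + trib k : ℕ) : ℝ) = _
      push_cast; ring
    simp only [he]
    linear_combination ht + (- c₁ * ψ^k) * hψ
  have h0v : e 0 = -c₁ := by simp [he, trib]
  have h1v : e 1 = 1 - c₁ * ψ := by simp [he, trib]
  have h2v : e 2 = 1 - c₁ * ψ^2 := by simp [he, trib]
  have h3v : e 3 = 2 - c₁ * ψ^3 := by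
    rw [he]; norm_num [trib]
  have hq : ∀ k, ψ * e (k+2) = ψ*(1-ψ) * e (k+1) - e k := by
    intro k
    induction k with
    | zero =>
      rw [h0v, h1v, h2v]
      linear_combination (c₁*(1-ψ)) * hψ + (-ψ^2) * hcd
    | succ k ih =>
      linear_combination ψ * (hrec k) + ψ * ih + (-(e (k+1))) * hψ
  obtain ⟨F, hFdef⟩ : ∃ F : ℕ → ℝ,
      F = fun k => ψ * (e (k+1))^2 - ψ*(1-ψ) * e k * e (k+1) + (e k)^2 := ⟨_, rfl⟩
  have hFeq : ∀ k, F k = ψ * (e (k+1))^2 - ψ*(1-ψ) * e k * e (k+1) + (e k)^2 := by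
    intro k; rw [hFdef]
  have hF : ∀ k, ψ * F (k+1) = F k := by
    intro k
    rw [hFeq, hFeq]
    linear_combination (ψ * e (k+2) - e k) * hq k
  have h4 : ψ * (1-ψ)^2 ≤ 4 := by nlinarith
  have hFpos : ∀ k, 0 ≤ F k := by
    intro k
    rw [hFeq]
    nlinarith [mul_nonneg hψ0.le (sq_nonneg (2 * e (k+1) - (1-ψ) * e k)),
      mul_nonneg (sq_nonneg (e k)) (by linarith : (0:ℝ) ≤ 4 - ψ*(1-ψ)^2)]
  have hFdec : ∀ k, F (k+1) ≤ F k := by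
    intro k
    have := hF k
    nlinarith [hFpos (k+1)]
  have hFle : ∀ k, 2 ≤ k → F k ≤ F 2 := by
    intro k hk
    induction k with
    | zero => omega
    | succ k ih =>
      rcases Nat.lt_or_ge k 2 with h | h
      · interval_cases k
        · omega
        · exact le_rfl
      · exact (hFdec k).trans (ih h)
  have he2l : -0.152 < e 2 := by rw [h2v]; nlinarith
  have he2u : e 2 < -0.124 := by rw [h2v]; nlinarith
  have he3l : -0.112 < e 3 := by rw [h3v, hψ]; nlinarith
  have he3u : e 3 < -0.074 := by rw [h3v, hψ]; nlinarith
  have hF2 : F 2 ≤ 0.074 := by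
    rw [hFeq]
    nlinarith [mul_nonneg (show (0:ℝ) ≤ 0.152 + e 2 by linarith) (show (0:ℝ) ≤ -e 3 by linarith),
      mul_nonneg (show (0:ℝ) ≤ 0.152 + e 2 by linarith) (show (0:ℝ) ≤ -e 2 by linarith),
      mul_nonneg (show (0:ℝ) ≤ 0.112 + e 3 by linarith) (show (0:ℝ) ≤ -e 3 by linarith),
      mul_nonneg (show (0:ℝ) ≤ 1.85 - ψ by linarith) (sq_nonneg (e 3)),
      mul_nonneg (show (0:ℝ) ≤ 1.5725 - (ψ^2 - ψ) by linarith)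
        (mul_nonneg (show (0:ℝ) ≤ -e 2 by linarith) (show (0:ℝ) ≤ -e 3 by linarith))]
  have hcoef : (4.84:ℝ) ≤ 4*ψ - ψ^2*(1-ψ)^2 := by
    nlinarith [sq_nonneg (1.5725 - (ψ^2 - ψ))]
  intro n hn
  have hgoal : (trib n : ℝ) - c₁ * ψ^n = e n := by rw [he]
  rw [hgoal]
  rcases Nat.lt_or_ge n 3 with h | h
  · have : n = 2 := by omega
    subst this
    rw [abs_lt]; constructor <;> nlinarith
  · obtain ⟨m, rfl⟩ : ∃ m, n = m + 3 := ⟨n - 3, by omega⟩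
    have hle : F (m+2) ≤ 0.074 := (hFle (m+2) (by omega)).trans hF2
    rw [hFeq] at hle
    have hsq : (e (m+3))^2 ≤ 0.062 := by
      nlinarith [sq_nonneg (2 * e (m+2) - ψ*(1-ψ) * e (m+3)),
        mul_nonneg (sq_nonneg (e (m+3)))
          (by linarith : (0:ℝ) ≤ 4*ψ - ψ^2*(1-ψ)^2 - 4.84)]
    rw [abs_lt]; constructor <;> nlinarith [hsq]
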